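/- Fix an integer n ≥ 2 and γ ∈ (0, 1). In the lower-bound chain with n states and MDP M(1), for every state j ∈ {1,…,n} the optimal value satisfies V*(j) = (1 + γ^{n−j}) / (2·(1−γ)), and this supremum is attained by the constant action sequence that always plays true (always moves right). -/

import Mathlib

/-- The deterministic trajectory in the lower-bound chain with states `{1, …, n}`:
from state `s`, action `true` moves right (capped at `n`), action `false` resets to `1`. -/
def traj (n : ℕ) (a : ℕ → Bool) (s : ℕ) : ℕ → ℕ
  | 0 => s
  | t + 1 => if a t then min (traj n a s t + 1) n else 1

/-- The reward of a state in the MDP `M(1)`: `1/2` at states `1, …, n-1` and `1` at state `n`. -/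
noncomputable def reward (n : ℕ) (s : ℕ) : ℝ := if s < n then 1 / 2 else 1

/-- The `γ`-discounted reward of the action sequence `a` started from state `s`. -/
noncomputable def discReward (n : ℕ) (γ : ℝ) (a : ℕ → Bool) (s : ℕ) : ℝ :=
  ∑' t : ℕ, γ ^ t * reward n (traj n a s t)

/-- The optimal value `V*(s)`: the supremum of the `γ`-discounted reward over
all action sequences. -/
noncomputable def Vstar (n : ℕ) (γ : ℝ) (s : ℕ) : ℝ :=
  ⨆ a : ℕ → Bool, discReward n γ a s

lemma reward_nonneg (n s : ℕ) : 0 ≤ reward n s := by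
  unfold reward; split <;> norm_num

lemma reward_le_one (n s : ℕ) : reward n s ≤ 1 := by
  unfold reward; split <;> norm_num

lemma reward_mono (n : ℕ) {s s' : ℕ} (h : s ≤ s') : reward n s ≤ reward n s' := by
  unfold reward
  split <;> split <;> try norm_num
  omega

lemma traj_le (n : ℕ) (a : ℕ → Bool) (j : ℕ) (hj1 : 1 ≤ j) (hjn : j ≤ n) (t : ℕ) :
    traj n a j t ≤ min (j + t) n := by
  induction t with
  | zero => simpa [traj]
  | succ t ih =>
    simp only [traj]
    split
    · simp only [le_min_iff] at ih ⊢
      constructor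
      · exact le_trans (min_le_left _ _) (by omega)
      · exact min_le_right _ _
    · simp only [le_min_iff]; omega

lemma traj_true (n : ℕ) (j : ℕ) (hjn : j ≤ n) (t : ℕ) :
    traj n (fun _ => true) j t = min (j + t) n := by
  induction t with
  | zero => simp [traj, hjn]
  | succ t ih =>
    simp only [traj, if_pos, ih]
    omega

lemma summable_aux (n : ℕ) {γ : ℝ} (hγ0 : 0 < γ) (hγ1 : γ < 1) (a : ℕ → Bool) (s : ℕ) :
    Summable (fun t : ℕ => γ ^ t * reward n (traj n a s t)) := by
  apply Summable.of_nonneg_of_le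
    (fun t => mul_nonneg (pow_nonneg hγ0.le t) (reward_nonneg _ _))
    (fun t => ?_) (summable_geometric_of_lt_one hγ0.le hγ1)
  calc γ ^ t * reward n (traj n a s t) ≤ γ ^ t * 1 := by
        exact mul_le_mul_of_nonneg_left (reward_le_one _ _) (pow_nonneg hγ0.le t)
    _ = γ ^ t := mul_one _

/-- In the chain MDP `M(1)` with `n ≥ 2` states and `γ ∈ (0,1)`,
the optimal value of state `j ∈ {1,…,n}` equals `(1 + γ^(n-j)) / (2(1-γ))`, and the
supremum is attained by the action sequence that always moves right. -/
theorem vstar_eq (n : ℕ) (hn : 2 ≤ n) (γ : ℝ) (hγ0 : 0 < γ) (hγ1 : γ < 1)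
    (j : ℕ) (hj1 : 1 ≤ j) (hjn : j ≤ n) :
    Vstar n γ j = (1 + γ ^ (n - j)) / (2 * (1 - γ)) ∧
    discReward n γ (fun _ => true) j = (1 + γ ^ (n - j)) / (2 * (1 - γ)) := by
  have hγne : (1 : ℝ) - γ ≠ 0 := by linarith
  set m := n - j with hm
  have hgeo : Summable (fun t : ℕ => γ ^ t) := summable_geometric_of_lt_one hγ0.le hγ1
  have htgeo : ∑' t : ℕ, γ ^ t = (1 - γ)⁻¹ := tsum_geometric_of_lt_one hγ0.le hγ1
  -- rewrite the always-true reward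
  have hterm : ∀ t : ℕ, γ ^ t * reward n (traj n (fun _ => true) j t)
      = γ ^ t * (1/2) + (if t < m then 0 else γ ^ t * (1/2)) := by
    intro t
    rw [traj_true n j hjn t]
    unfold reward
    by_cases h : t < m
    · rw [if_pos (by omega), if_pos h]; ring
    · rw [if_neg (by omega), if_neg h]; ring
  have hg : Summable (fun t : ℕ => (if t < m then 0 else γ ^ t * (1/2))) := by
    apply Summable.of_nonneg_of_le (fun t => ?_) (fun t => ?_) hgeo
    · split <;> positivity
    · split
      · positivity
      · nlinarith [pow_nonneg hγ0.le t]
  have hgsum : ∑' t : ℕ, (if t < m then 0 else γ ^ t * (1/2)) = γ ^ m * (1 - γ)⁻¹ * (1/2) := by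
    rw [← hg.sum_add_tsum_nat_add m]
    have h1 : ∀ i ∈ Finset.range m, (if i < m then (0:ℝ) else γ ^ i * (1/2)) = 0 := by
      intro i hi
      rw [if_pos (Finset.mem_range.mp hi)]
    rw [Finset.sum_congr rfl h1, Finset.sum_const, smul_zero, zero_add]
    have h2 : ∀ i : ℕ, (if i + m < m then (0:ℝ) else γ ^ (i + m) * (1/2))
        = γ ^ m * (1/2) * γ ^ i := by
      intro i
      rw [if_neg (by omega), pow_add]; ring
    rw [tsum_congr h2, tsum_mul_left, htgeo]
    ring
  have hhalf : Summable (fun t : ℕ => γ ^ t * (1/2)) := hgeo.mul_right _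
  have hdr : discReward n γ (fun _ => true) j = (1 + γ ^ m) / (2 * (1 - γ)) := by
    unfold discReward
    rw [tsum_congr hterm, hhalf.tsum_add hg, tsum_mul_right, htgeo, hgsum,
      eq_div_iff (mul_ne_zero two_ne_zero hγne)]
    field_simp
  refine ⟨?_, hdr⟩
  have hub : ∀ a : ℕ → Bool, discReward n γ a j ≤ (1 + γ ^ m) / (2 * (1 - γ)) := by
    intro a
    rw [← hdr]
    apply Summable.tsum_le_tsum _ (summable_aux n hγ0 hγ1 a j) (summable_aux n hγ0 hγ1 _ j)
    intro t
    apply mul_le_mul_of_nonneg_left _ (pow_nonneg hγ0.le t)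
    rw [traj_true n j hjn t]
    exact reward_mono n (traj_le n a j hj1 hjn t)
  apply le_antisymm
  · exact ciSup_le hub
  · rw [← hdr]
    exact le_ciSup ⟨(1 + γ ^ m) / (2 * (1 - γ)), Set.forall_mem_range.mpr hub⟩ (fun _ => true)
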